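/- For L > μ > 0, the function F : ℓ² → ℝ defined by F(x) = (μ/2)·‖x‖² + ((L−μ)/4)·[(x₁ − 1)² + ∑_{k=1}^∞ (x_k − x_{k+1})²] has a unique minimizer x* ∈ ℓ², given coordinatewise by x*_p = q^p for all p ≥ 1, where q = (√(2L/μ − 1) − 1)/(√(2L/μ − 1) + 1) ∈ (0,1); equivalently, q is the unique root in (0,1) of the equation μ·q = ((L−μ)/2)·(1−q)². -/

import Mathlib

set_option maxHeartbeats 1000000

private lemma sqsum_of_mem (f : ℕ → ℝ) (hf : Memℓp f 2) : Summable (fun k => (f k)^2) := by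
  have h := hf.summable (p := 2) (by norm_num)
  simpa [Real.rpow_natCast, Real.norm_eq_abs, sq_abs] using h

private lemma mem_of_sqsum (f : ℕ → ℝ) (hf : Summable (fun k => (f k)^2)) : Memℓp f 2 := by
  apply memℓp_gen
  simpa [Real.rpow_natCast, Real.norm_eq_abs, sq_abs] using hf

private lemma summable_mul_of_sq {f g : ℕ → ℝ} (hf : Summable (fun k => (f k)^2))
    (hg : Summable (fun k => (g k)^2)) : Summable (fun k => f k * g k) := by
  apply Summable.of_abs
  apply Summable.of_nonneg_of_le (fun k => abs_nonneg _) (fun k => ?_)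
    ((hf.add hg).mul_left (1/2 : ℝ))
  have h1 : |f k * g k| = |f k| * |g k| := abs_mul _ _
  nlinarith [sq_nonneg (|f k| - |g k|), sq_abs (f k), sq_abs (g k)]

/-- For `L > μ > 0`, the function
`F(x) = (μ/2)‖x‖² + ((L−μ)/4)[(x₁ − 1)² + ∑_{k≥1} (x_k − x_{k+1})²]` on `ℓ²`
(coordinates are indexed from `0` here, so the `0`-th coordinate is `x₁`) has a unique
minimizer `x*`, given coordinatewise by `x*_p = q^p` for `p ≥ 1`, where
`q = (√(2L/μ − 1) − 1)/(√(2L/μ − 1) + 1) ∈ (0,1)` is the unique root in `(0,1)` of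
`μq = ((L−μ)/2)(1 − q)²`. -/
theorem lower_bound_function_unique_minimizer (L μ : ℝ) (hμ : 0 < μ) (hμL : μ < L)
    (F : lp (fun _ : ℕ => ℝ) 2 → ℝ)
    (hF : ∀ x : lp (fun _ : ℕ => ℝ) 2,
      F x = μ / 2 * ‖x‖ ^ 2 +
        (L - μ) / 4 * ((x 0 - 1) ^ 2 + ∑' k : ℕ, (x k - x (k + 1)) ^ 2))
    (q : ℝ)
    (hq : q = (Real.sqrt (2 * L / μ - 1) - 1) / (Real.sqrt (2 * L / μ - 1) + 1)) :
    0 < q ∧ q < 1 ∧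
    μ * q = (L - μ) / 2 * (1 - q) ^ 2 ∧
    (∀ r : ℝ, 0 < r → r < 1 → μ * r = (L - μ) / 2 * (1 - r) ^ 2 → r = q) ∧
    ∃ xstar : lp (fun _ : ℕ => ℝ) 2,
      (∀ p : ℕ, xstar p = q ^ (p + 1)) ∧
      (∀ y, F xstar ≤ F y) ∧
      (∀ z : lp (fun _ : ℕ => ℝ) 2, (∀ y, F z ≤ F y) → z = xstar) := by
  have hX1 : (1:ℝ) < 2 * L / μ - 1 := by
    rw [lt_sub_iff_add_lt, lt_div_iff₀ hμ]; linarith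
  set s := Real.sqrt (2 * L / μ - 1) with hs_def
  have hs_nn : 0 ≤ s := Real.sqrt_nonneg _
  have hs2 : s ^ 2 = 2 * L / μ - 1 := Real.sq_sqrt (by linarith)
  have hs1 : 1 < s := by nlinarith
  have hq0 : 0 < q := by rw [hq]; exact div_pos (by linarith) (by linarith)
  have hq1 : q < 1 := by rw [hq]; exact (div_lt_one (by linarith)).2 (by linarith)
  have hroot : μ * q = (L - μ) / 2 * (1 - q) ^ 2 := by
    rw [hq]
    have hne : s + 1 ≠ 0 := by linarith
    have hs2m : μ * s ^ 2 = 2 * L - μ := by rw [hs2]; field_simp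
    field_simp
    linear_combination 2 * hs2m
  have huniq : ∀ r : ℝ, 0 < r → r < 1 → μ * r = (L - μ) / 2 * (1 - r) ^ 2 → r = q := by
    intro r hr0 hr1 hr
    have key : (r - q) * (μ + (L - μ) / 2 * (2 - r - q)) = 0 := by
      linear_combination hr - hroot
    have hpos : 0 < μ + (L - μ) / 2 * (2 - r - q) := by nlinarith
    rcases mul_eq_zero.1 key with h | h
    · linarith
    · linarith
  -- the candidate minimizer
  have hqq : q ^ 2 < 1 := by nlinarith
  have hgeo : Summable (fun k : ℕ => (q ^ 2) ^ k) :=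
    summable_geometric_of_lt_one (by positivity) hqq
  have hq2sum : Summable (fun k : ℕ => (q ^ (k + 1)) ^ 2) :=
    (hgeo.mul_left (q ^ 2)).congr (fun k => by ring)
  have hmem : Memℓp (fun p : ℕ => q ^ (p + 1)) 2 := mem_of_sqsum _ hq2sum
  set X : lp (fun _ : ℕ => ℝ) 2 := ⟨fun p : ℕ => q ^ (p + 1), hmem⟩ with hX_def
  have hX : ∀ k : ℕ, X k = q ^ (k + 1) := fun k => rfl
  have ha2 : Summable (fun k : ℕ => (q ^ (k + 1) - q ^ (k + 2)) ^ 2) :=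
    (hgeo.mul_left ((1 - q) ^ 2 * q ^ 2)).congr (fun k => by ring)
  -- the key identity
  have key : ∀ y : lp (fun _ : ℕ => ℝ) 2,
      F y = F X + μ / 2 * ‖y - X‖ ^ 2 +
        (L - μ) / 4 * (((y - X) 0) ^ 2 + ∑' k : ℕ, ((y - X) k - (y - X) (k + 1)) ^ 2) := by
    intro y
    set h : lp (fun _ : ℕ => ℝ) 2 := y - X with hh_def
    have hy : y = X + h := by rw [hh_def]; abel
    have hy' : ∀ k : ℕ, y k = q ^ (k + 1) + h k := by
      intro k
      have hk : h k = y k - X k := by rw [hh_def, lp.coeFn_sub]; rfl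
      rw [hX k] at hk; linarith
    have hh2 : Summable (fun k => (h k) ^ 2) := sqsum_of_mem _ (lp.memℓp h)
    have hh2' : Summable (fun k => (h (k + 1)) ^ 2) :=
      hh2.comp_injective (add_left_injective 1)
    have hb2 : Summable (fun k => (h k - h (k + 1)) ^ 2) := by
      apply Summable.of_nonneg_of_le (fun k => sq_nonneg _) (fun k => ?_)
        ((hh2.add hh2').mul_left 2)
      nlinarith [sq_nonneg (h k + h (k + 1))]
    have hS : Summable (fun k : ℕ => q ^ (k + 1) * h k) := summable_mul_of_sq hq2sum hh2
    have hUs : Summable (fun k : ℕ => q ^ (k + 1) * h (k + 1)) := summable_mul_of_sq hq2sum hh2'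
    have hab : Summable (fun k : ℕ => (q ^ (k + 1) - q ^ (k + 2)) * (h k - h (k + 1))) :=
      summable_mul_of_sq ha2 hb2
    set S : ℝ := ∑' k : ℕ, q ^ (k + 1) * h k with hS_def
    set U : ℝ := ∑' k : ℕ, q ^ (k + 1) * h (k + 1) with hU_def
    set T : ℝ := ∑' k : ℕ, (q ^ (k + 1) - q ^ (k + 2)) * (h k - h (k + 1)) with hT_def
    set A : ℝ := ∑' k : ℕ, (q ^ (k + 1) - q ^ (k + 2)) ^ 2 with hA_def
    set B : ℝ := ∑' k : ℕ, (h k - h (k + 1)) ^ 2 with hB_def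
    have hqU : q * U = S - q * h 0 := by
      have h1 : S = q ^ (0 + 1) * h 0 + ∑' k : ℕ, q ^ (k + 1 + 1) * h (k + 1) :=
        Summable.tsum_eq_zero_add hS
      have h2 : ∑' k : ℕ, q ^ (k + 1 + 1) * h (k + 1) = q * U := by
        rw [hU_def, ← tsum_mul_left]
        exact tsum_congr (fun k => by ring)
      rw [h2] at h1; linear_combination -h1
    have hT : T = (1 - q) * (S - U) := by
      have h1 : T = ∑' k : ℕ,
          ((1 - q) * (q ^ (k + 1) * h k) - (1 - q) * (q ^ (k + 1) * h (k + 1))) := by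
        rw [hT_def]; exact tsum_congr (fun k => by ring)
      rw [h1, Summable.tsum_sub (hS.mul_left _) (hUs.mul_left _), tsum_mul_left, tsum_mul_left]
      ring
    have e_inner : (inner ℝ X h : ℝ) = S := by
      rw [lp.inner_eq_tsum, hS_def]
      exact tsum_congr (fun k => by simp [RCLike.inner_apply, conj_trivial, hX k, mul_comm])
    have e_norm : ‖y‖ ^ 2 = ‖X‖ ^ 2 + 2 * S + ‖h‖ ^ 2 := by
      rw [hy, norm_add_sq_real, e_inner]
    have e_y0 : y 0 = q + h 0 := by simpa using hy' 0
    have e_tsum_y : (∑' k : ℕ, (y k - y (k + 1)) ^ 2) = A + (2 * T + B) := by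
      have hpt : ∀ k : ℕ, (y k - y (k + 1)) ^ 2 =
          (q ^ (k + 1) - q ^ (k + 2)) ^ 2 +
            (2 * ((q ^ (k + 1) - q ^ (k + 2)) * (h k - h (k + 1))) + (h k - h (k + 1)) ^ 2) := by
        intro k
        rw [hy' k, hy' (k + 1)]; ring
      rw [tsum_congr hpt, Summable.tsum_add ha2 ((hab.mul_left 2).add hb2),
        Summable.tsum_add (hab.mul_left 2) hb2, tsum_mul_left]
    have e_tsum_X : (∑' k : ℕ, (X k - X (k + 1)) ^ 2) = A := by
      rw [hA_def]
    have e2 : F X = μ / 2 * ‖X‖ ^ 2 + (L - μ) / 4 * ((q - 1) ^ 2 + A) := by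
      rw [hF X, e_tsum_X, hX 0]; norm_num
    have hcross : q * (μ * S + (L - μ) / 2 * (q - 1) * h 0 + (L - μ) / 2 * T) = 0 := by
      linear_combination S * hroot + (L - μ) / 2 * q * hT - (L - μ) / 2 * (1 - q) * hqU
    have hcross' : μ * S + (L - μ) / 2 * (q - 1) * h 0 + (L - μ) / 2 * T = 0 := by
      rcases mul_eq_zero.1 hcross with hc | hc
      · exact absurd hc (ne_of_gt hq0)
      · exact hc
    rw [hF y, e_norm, e_y0, e_tsum_y, e2]
    linear_combination hcross'
  have hmin : ∀ y, F X ≤ F y := by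
    intro y
    rw [key y]
    have hB : 0 ≤ ∑' k : ℕ, ((y - X) k - (y - X) (k + 1)) ^ 2 :=
      tsum_nonneg (fun k => sq_nonneg _)
    nlinarith [sq_nonneg ‖y - X‖, sq_nonneg ((y - X) 0)]
  refine ⟨hq0, hq1, hroot, huniq, X, fun p => rfl, hmin, ?_⟩
  intro z hz
  have h1 : F z = F X := le_antisymm (hz X) (hmin z)
  have h2 := key z
  rw [h1] at h2
  have hB : 0 ≤ ∑' k : ℕ, ((z - X) k - (z - X) (k + 1)) ^ 2 :=
    tsum_nonneg (fun k => sq_nonneg _)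
  have hnorm : ‖z - X‖ ^ 2 ≤ 0 := by nlinarith [sq_nonneg ((z - X) 0)]
  have : ‖z - X‖ = 0 := by nlinarith [norm_nonneg (z - X)]
  have := norm_eq_zero.1 this
  exact sub_eq_zero.1 this
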